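/- Let Q₁, Q₂ : ℝ → Matrix (Fin 3) (Fin 3) ℝ be differentiable at t, with Q₁(t)ᵀ Q₁(t) = 1, Q₂(t)ᵀ Q₂(t) = 1, det Q₁(t) = 1, det Q₂(t) = 1, and let ω₁(t), ω₂(t) ∈ ℝ³ be such that for all x ∈ ℝ³, (Q₁'(t) Q₁(t)ᵀ).mulVec x = ω₁(t) ×₃ x and (Q₂'(t) Q₂(t)ᵀ).mulVec x = ω₂(t) ×₃ x, where Qᵢ' denotes the derivative of Qᵢ. Set Q(t) = Q₂(t) Q₁(t)ᵀ. Then for all x ∈ ℝ³, (Q(t)ᵀ Q'(t)).mulVec x = (Q(t)ᵀ.mulVec ω₂(t) − ω₁(t)) ×₃ x, where Q'(t) = Q₂'(t) Q₁(t)ᵀ + Q₂(t) Q₁'(t)ᵀ is the derivative of Q at t. -/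

import Mathlib

open Matrix

lemma rot_cross_aux (R : Matrix (Fin 3) (Fin 3) ℝ) (a b : Fin 3 → ℝ) :
    (R.mulVec a) ⨯₃ (R.mulVec b) = (R.adjugate)ᵀ.mulVec (a ⨯₃ b) := by
  funext i
  fin_cases i <;>
    simp [cross_apply, mulVec, dotProduct, Fin.sum_univ_three, adjugate_fin_three,
      Matrix.transpose_apply] <;> ring

lemma rot_cross (R : Matrix (Fin 3) (Fin 3) ℝ) (h1 : Rᵀ * R = 1) (h2 : R.det = 1)
    (a b : Fin 3 → ℝ) :
    R.mulVec (a ⨯₃ b) = (R.mulVec a) ⨯₃ (R.mulVec b) := by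
  have h1' : R * Rᵀ = 1 := mul_eq_one_comm.mp h1
  have hadj : R.adjugate = Rᵀ := by
    have := R.mul_adjugate
    rw [h2, one_smul] at this
    have hinv : Invertible R := invertibleOfRightInverse R _ this
    calc R.adjugate = (R⁻¹ * R) * R.adjugate := by rw [Matrix.nonsing_inv_mul R (by simp [h2]), Matrix.one_mul]
    _ = R⁻¹ * (R * R.adjugate) := by rw [Matrix.mul_assoc]
    _ = R⁻¹ := by rw [this, Matrix.mul_one]
    _ = Rᵀ := by
        rw [Matrix.inv_eq_right_inv h1']
  rw [rot_cross_aux, hadj, transpose_transpose]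

lemma skew_of (S : Matrix (Fin 3) (Fin 3) ℝ) (ω : Fin 3 → ℝ)
    (h : ∀ x, S.mulVec x = ω ⨯₃ x) (x : Fin 3 → ℝ) :
    Sᵀ.mulVec x = -(ω ⨯₃ x) := by
  have hS : S = !![0, -ω 2, ω 1; ω 2, 0, -ω 0; -ω 1, ω 0, 0] := by
    ext i j
    have := congrFun (h (Pi.single j 1)) i
    rw [mulVec_single] at this
    fin_cases i <;> fin_cases j <;>
      simpa [cross_apply, Pi.single_apply] using this
  subst hS
  funext i
  fin_cases i <;>
    simp [cross_apply, mulVec, dotProduct, Fin.sum_univ_three] <;> ring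


/-- Lemma 2 (estimateOmega): if rotations `Q₁, Q₂ ∈ SO(3)` have spatial angular
velocities `ω₁, ω₂` (i.e. `Qᵢ' Qᵢᵀ x = ωᵢ × x`), then the relative rotation
`Q = Q₂ Q₁ᵀ` satisfies `Qᵀ Q' x = (Qᵀ ω₂ − ω₁) × x`, i.e. its body angular
velocity is `ω̃ = Ω₂ − ω₁` with `Ω₂ = Qᵀ ω₂`. -/
theorem relative_angular_velocity
    (t : ℝ) (Q₁ Q₂ Q₁' Q₂' : ℝ → Matrix (Fin 3) (Fin 3) ℝ)
    (ω₁ ω₂ : ℝ → Fin 3 → ℝ)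
    (hd₁ : ∀ i j, HasDerivAt (fun τ => Q₁ τ i j) (Q₁' t i j) t)
    (hd₂ : ∀ i j, HasDerivAt (fun τ => Q₂ τ i j) (Q₂' t i j) t)
    (ho₁ : (Q₁ t)ᵀ * Q₁ t = 1) (ho₂ : (Q₂ t)ᵀ * Q₂ t = 1)
    (hdet₁ : (Q₁ t).det = 1) (hdet₂ : (Q₂ t).det = 1)
    (hω₁ : ∀ x : Fin 3 → ℝ, (Q₁' t * (Q₁ t)ᵀ).mulVec x = ω₁ t ⨯₃ x)
    (hω₂ : ∀ x : Fin 3 → ℝ, (Q₂' t * (Q₂ t)ᵀ).mulVec x = ω₂ t ⨯₃ x) :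
    ∀ x : Fin 3 → ℝ,
      ((Q₂ t * (Q₁ t)ᵀ)ᵀ * (Q₂' t * (Q₁ t)ᵀ + Q₂ t * (Q₁' t)ᵀ)).mulVec x
        = ((Q₂ t * (Q₁ t)ᵀ)ᵀ.mulVec (ω₂ t) - ω₁ t) ⨯₃ x := by
  intro x
  set A := Q₁ t; set B := Q₂ t; set A' := Q₁' t; set B' := Q₂' t
  have ho₁' : A * Aᵀ = 1 := mul_eq_one_comm.mp ho₁
  have ho₂' : B * Bᵀ = 1 := mul_eq_one_comm.mp ho₂
  set R := A * Bᵀ with hR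
  have hRt : (B * Aᵀ)ᵀ = R := by simp [hR, Matrix.transpose_mul]
  have hRo : Rᵀ * R = 1 := by
    simp only [hR, Matrix.transpose_mul, transpose_transpose]
    calc B * Aᵀ * (A * Bᵀ) = B * (Aᵀ * A) * Bᵀ := by noncomm_ring
    _ = 1 := by rw [ho₁, Matrix.mul_one, ho₂']
  have hRdet : R.det = 1 := by
    simp [hR, Matrix.det_mul, hdet₁, hdet₂]
  -- decompose the matrix
  have hsplit : (B * Aᵀ)ᵀ * (B' * Aᵀ + B * A'ᵀ)
      = R * (B' * Bᵀ) * Rᵀ + (A' * Aᵀ)ᵀ := by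
    rw [hRt, hR]
    have : Rᵀ = B * Aᵀ := by simp [hR, Matrix.transpose_mul]
    calc A * Bᵀ * (B' * Aᵀ + B * A'ᵀ)
        = A * Bᵀ * (B' * Aᵀ) + A * (Bᵀ * B) * A'ᵀ := by noncomm_ring
      _ = A * Bᵀ * (B' * Bᵀ) * (B * Aᵀ) + A * A'ᵀ := by
          rw [ho₂, Matrix.mul_one]
          congr 1
          calc A * Bᵀ * (B' * Aᵀ) = A * Bᵀ * B' * Aᵀ := by noncomm_ring
          _ = A * Bᵀ * (B' * (Bᵀ * B)) * Aᵀ := by rw [ho₂, Matrix.mul_one]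
          _ = A * Bᵀ * (B' * Bᵀ) * (B * Aᵀ) := by noncomm_ring
      _ = A * Bᵀ * (B' * Bᵀ) * (A * Bᵀ)ᵀ + (A' * Aᵀ)ᵀ := by
          rw [Matrix.transpose_mul, transpose_transpose, Matrix.transpose_mul,
            transpose_transpose]
  rw [hsplit, Matrix.add_mulVec]
  have hRR : R * Rᵀ = 1 := mul_eq_one_comm.mp hRo
  have h1 : (R * (B' * Bᵀ) * Rᵀ).mulVec x = (R.mulVec (ω₂ t)) ⨯₃ x := by
    have e : (R * (B' * Bᵀ) * Rᵀ).mulVec x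
        = R.mulVec ((B' * Bᵀ).mulVec (Rᵀ.mulVec x)) := by
      simp [Matrix.mulVec_mulVec, Matrix.mul_assoc]
    rw [e, hω₂, rot_cross R hRo hRdet, Matrix.mulVec_mulVec, hRR, Matrix.one_mulVec]
  have h2 : ((A' * Aᵀ)ᵀ).mulVec x = -(ω₁ t ⨯₃ x) := skew_of _ _ hω₁ x
  rw [h1, h2, hRt]
  funext i
  fin_cases i <;> simp [cross_apply, Pi.sub_apply] <;> ring
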